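/- For all n ≥ 0, the fully degenerate Bell number Bel_{n,λ} = Σ_{k=0}^n {n brace k}_λ (1)_{k,λ} reduces at λ = 0 to the Bell number φ_n (the number of set partitions of an n-element set), i.e., the Spivey recurrence Bel_{n+m,λ} = Σ_{l,k} (1)_{k,λ}{m brace k}_λ C(n,l) Bel_{l,λ} F_{n−l,λ}^{(k)}(−λ, k−mλ) specializes at λ = 0 to φ_{n+m} = Σ_{l=0}^n Σ_{k=0}^m {m brace k} C(n,l) k^{n−l} φ_l. -/

import Mathlib

open PowerSeries

/-- The degenerate falling factorial `(x)_{n,λ}`. -/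
def degFall (lam x : ℝ) (n : ℕ) : ℝ := ∏ i ∈ Finset.range n, (x - i * lam)

/-- The ordinary falling factorial `(x)_k`. -/
def fallF (x : ℝ) (k : ℕ) : ℝ := ∏ i ∈ Finset.range k, (x - i)

/-- The degenerate exponential `e_λ^y(t) = Σ_{m≥0} (y)_{m,λ} t^m/m!`. -/
noncomputable def degExpP (lam y : ℝ) : PowerSeries ℝ :=
  PowerSeries.mk fun m => degFall lam y m / (Nat.factorial m)

/-- The two-variable degenerate Fubini polynomials of order `k ∈ ℕ`. -/
noncomputable def degFubiniOrd (lam : ℝ) (k : ℕ) (x y : ℝ) (j : ℕ) : ℝ :=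
  (Nat.factorial j : ℝ) * PowerSeries.coeff (R := ℝ) j
    (((1 - PowerSeries.C (R := ℝ) x * (degExpP lam 1 - 1))⁻¹) ^ k * degExpP lam y)

lemma degFall_zero (z : ℝ) (n : ℕ) : degFall 0 z n = z ^ n := by
  simp [degFall]

lemma fallF_nat_zero {j k : ℕ} (h : j < k) : fallF (j : ℝ) k = 0 := by
  apply Finset.prod_eq_zero (Finset.mem_range.mpr h); simp

lemma fallF_self_ne (j : ℕ) : fallF (j : ℝ) j ≠ 0 := by
  unfold fallF
  apply Finset.prod_ne_zero_iff.mpr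
  intro i hi
  have h : i < j := Finset.mem_range.mp hi
  have : (i : ℝ) < j := by exact_mod_cast h
  intro hc; linarith [sub_eq_zero.mp hc]

lemma uniq (N : ℕ) (c : ℕ → ℝ)
    (h : ∀ z : ℝ, ∑ k ∈ Finset.range N, c k * fallF z k = 0) :
    ∀ j, j < N → c j = 0 := by
  intro j
  induction j using Nat.strong_induction_on with
  | _ j ih =>
    intro hj
    have h1 := h (j : ℝ)
    have h2 : ∑ k ∈ Finset.range N, c k * fallF (j : ℝ) k = c j * fallF (j:ℝ) j := by
      apply Finset.sum_eq_single
      · intro k hk hne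
        rcases lt_or_gt_of_ne hne with hlt | hgt
        · rw [ih k hlt (lt_trans hlt hj)]; ring
        · rw [fallF_nat_zero hgt]; ring
      · intro h'; exact absurd (Finset.mem_range.mpr hj) h'
    rw [h2] at h1
    exact (mul_eq_zero.mp h1).resolve_right (fallF_self_ne j)

lemma fallF_add (z : ℝ) (k j : ℕ) : fallF z (k + j) = fallF z k * fallF (z - k) j := by
  unfold fallF
  rw [Finset.prod_range_add]
  congr 1
  apply Finset.prod_congr rfl
  intro i _
  push_cast; ring

lemma fub_eq (k j : ℕ) : degFubiniOrd 0 k 0 (k : ℝ) j = (k : ℝ) ^ j := by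
  unfold degFubiniOrd
  simp [degExpP, coeff_mk, degFall_zero]
  rw [mul_div_cancel₀]
  exact_mod_cast Nat.factorial_ne_zero j

lemma collect (n m : ℕ) (A : ℕ → ℕ → ℕ → ℝ) (f : ℕ → ℝ) :
    ∑ i ∈ Finset.range (n + m + 1),
      (∑ k ∈ Finset.range (m+1), ∑ l ∈ Finset.range (n+1), ∑ j ∈ Finset.range (l+1),
        if k + j = i then A k l j else 0) * f i
    = ∑ k ∈ Finset.range (m+1), ∑ l ∈ Finset.range (n+1), ∑ j ∈ Finset.range (l+1),
        A k l j * f (k + j) := by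
  simp only [Finset.sum_mul, ite_mul, zero_mul]
  rw [Finset.sum_comm]
  apply Finset.sum_congr rfl; intro k hk
  rw [Finset.sum_comm]
  apply Finset.sum_congr rfl; intro l hl
  rw [Finset.sum_comm]
  apply Finset.sum_congr rfl; intro j hj
  rw [Finset.sum_ite_eq]
  have : k + j ∈ Finset.range (n + m + 1) := by
    simp only [Finset.mem_range] at *
    omega
  simp [this]

lemma key (T : ℕ → ℕ → ℝ)
    (hT : ∀ (n : ℕ) (z : ℝ), z ^ n = ∑ k ∈ Finset.range (n + 1), T n k * fallF z k)
    (n m : ℕ) :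
    ∑ i ∈ Finset.range (n + m + 1), T (n + m) i =
    ∑ k ∈ Finset.range (m+1), ∑ l ∈ Finset.range (n+1), ∑ j ∈ Finset.range (l+1),
      T m k * (n.choose l : ℝ) * (k : ℝ) ^ (n - l) * T l j := by
  set A : ℕ → ℕ → ℕ → ℝ := fun k l j => T m k * (n.choose l : ℝ) * (k : ℝ) ^ (n - l) * T l j with hA
  set c : ℕ → ℝ := fun i =>
    ∑ k ∈ Finset.range (m+1), ∑ l ∈ Finset.range (n+1), ∑ j ∈ Finset.range (l+1),
      if k + j = i then A k l j else 0 with hc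
  have hcf : ∀ z : ℝ, ∑ i ∈ Finset.range (n + m + 1), c i * fallF z i = z ^ (n + m) := by
    intro z
    rw [show (∑ i ∈ Finset.range (n + m + 1), c i * fallF z i) =
      ∑ i ∈ Finset.range (n + m + 1),
        (∑ k ∈ Finset.range (m+1), ∑ l ∈ Finset.range (n+1), ∑ j ∈ Finset.range (l+1),
          if k + j = i then A k l j else 0) * fallF z i from rfl]
    rw [collect n m A (fallF z)]
    have step1 : ∀ k ∈ Finset.range (m+1),
        (∑ l ∈ Finset.range (n+1), ∑ j ∈ Finset.range (l+1), A k l j * fallF z (k+j))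
        = T m k * fallF z k * z ^ n := by
      intro k _
      have binom : z ^ n = ∑ l ∈ Finset.range (n+1),
          (n.choose l : ℝ) * (k : ℝ) ^ (n - l) * (z - k) ^ l := by
        have := add_pow (z - (k:ℝ)) (k:ℝ) n
        simp only [sub_add_cancel] at this
        rw [this]
        apply Finset.sum_congr rfl; intro l _; ring
      rw [binom]
      simp only [Finset.mul_sum]
      apply Finset.sum_congr rfl; intro l _
      rw [hT l (z - (k:ℝ))]
      simp only [Finset.mul_sum]
      apply Finset.sum_congr rfl; intro j _
      rw [fallF_add]
      simp only [hA]; ring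
    rw [Finset.sum_congr rfl step1, ← Finset.sum_mul, ← hT m z, ← pow_add, Nat.add_comm m n]
  have hzero : ∀ z : ℝ,
      ∑ i ∈ Finset.range (n + m + 1), (T (n+m) i - c i) * fallF z i = 0 := by
    intro z
    simp only [sub_mul, Finset.sum_sub_distrib]
    rw [hcf z, ← hT (n+m) z, sub_self]
  have heq : ∀ i ∈ Finset.range (n + m + 1), T (n+m) i = c i := by
    intro i hi
    have := uniq (n+m+1) _ hzero i (Finset.mem_range.mp hi)
    linarith
  rw [Finset.sum_congr rfl heq]
  rw [show (∑ i ∈ Finset.range (n + m + 1), c i) =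
    ∑ i ∈ Finset.range (n + m + 1), c i * 1 by simp]
  exact collect n m A (fun _ => (1:ℝ)) |>.trans (by simp [hA])

/-- At `λ = 0` the fully degenerate Bell number `Bel_{n,λ} = Σ_k {n brace k}_λ (1)_{k,λ}`
reduces to the Bell number `φ_n = Σ_k {n brace k}`, the right-hand side of the
degenerate Spivey recurrence specializes to the classical one, and the classical
Spivey recurrence `φ_{n+m} = Σ_{l=0}^n Σ_{k=0}^m {m brace k} C(n,l) k^{n−l} φ_l`
holds.  Here `S lam n k = {n brace k}_λ` is defined by
`(z)_{n,λ} = Σ_k S lam n k (z)_k` and `T n k = {n brace k}` by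
`z^n = Σ_k T n k (z)_k`. -/
theorem stmt17 (S : ℝ → ℕ → ℕ → ℝ)
    (hS : ∀ (lam : ℝ) (n : ℕ) (z : ℝ),
      degFall lam z n = ∑ k ∈ Finset.range (n + 1), S lam n k * fallF z k)
    (T : ℕ → ℕ → ℝ)
    (hT : ∀ (n : ℕ) (z : ℝ), z ^ n = ∑ k ∈ Finset.range (n + 1), T n k * fallF z k)
    (n m : ℕ) :
    (∀ N : ℕ, ∑ k ∈ Finset.range (N + 1), S 0 N k * degFall 0 1 k =
        ∑ k ∈ Finset.range (N + 1), T N k) ∧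
    (∑ l ∈ Finset.range (n + 1), ∑ k ∈ Finset.range (m + 1),
        degFall 0 1 k * S 0 m k * (n.choose l : ℝ) *
          (∑ j ∈ Finset.range (l + 1), S 0 l j * degFall 0 1 j) *
          degFubiniOrd 0 k (-(0 : ℝ)) ((k : ℝ) - m * 0) (n - l) =
      ∑ l ∈ Finset.range (n + 1), ∑ k ∈ Finset.range (m + 1),
        T m k * (n.choose l : ℝ) * (k : ℝ) ^ (n - l) *
          (∑ j ∈ Finset.range (l + 1), T l j)) ∧
    (∑ k ∈ Finset.range (n + m + 1), T (n + m) k) =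
      ∑ l ∈ Finset.range (n + 1), ∑ k ∈ Finset.range (m + 1),
        T m k * (n.choose l : ℝ) * (k : ℝ) ^ (n - l) *
          (∑ j ∈ Finset.range (l + 1), T l j) := by
  -- S at lam = 0 equals T
  have hST : ∀ N k, k < N + 1 → S 0 N k = T N k := by
    intro N
    have h0 : ∀ z : ℝ, ∑ k ∈ Finset.range (N + 1), (S 0 N k - T N k) * fallF z k = 0 := by
      intro z
      simp only [sub_mul, Finset.sum_sub_distrib]
      rw [← hS 0 N z, ← hT N z, degFall_zero, sub_self]
    intro k hk
    have := uniq (N + 1) _ h0 k hk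
    linarith
  have hdeg1 : ∀ k : ℕ, degFall 0 1 k = 1 := by
    intro k; rw [degFall_zero]; simp
  refine ⟨?_, ?_, ?_⟩
  · intro N
    apply Finset.sum_congr rfl
    intro k hk
    rw [hdeg1, hST N k (Finset.mem_range.mp hk), mul_one]
  · apply Finset.sum_congr rfl
    intro l hl
    apply Finset.sum_congr rfl
    intro k hk
    have hfub : degFubiniOrd 0 k (-(0 : ℝ)) ((k : ℝ) - m * 0) (n - l) = (k : ℝ) ^ (n - l) := by
      rw [show (-(0:ℝ)) = 0 by ring, show ((k:ℝ) - m * 0) = (k:ℝ) by ring, fub_eq]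
    rw [hfub, hdeg1, hST m k (Finset.mem_range.mp hk)]
    have hin : (∑ j ∈ Finset.range (l + 1), S 0 l j * degFall 0 1 j) =
        ∑ j ∈ Finset.range (l + 1), T l j := by
      apply Finset.sum_congr rfl
      intro j hj
      rw [hdeg1, hST l j (Finset.mem_range.mp hj), mul_one]
    rw [hin]; ring
  · rw [key T hT n m, Finset.sum_comm]
    apply Finset.sum_congr rfl
    intro l _
    apply Finset.sum_congr rfl
    intro k _
    rw [Finset.mul_sum]
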